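/- If H is a multiplicative subgroup of F_p^× with |H| ≥ p^δ (0 < δ < 1), then there exists k = k(δ) such that kH − kH = F_p, i.e. every element of F_p is a difference of two sums of k elements of H. -/

import Mathlib

open Finset
open scoped Pointwise Classical

/-- The `k`-fold iterated sumset `A + A + ⋯ + A` (`k` copies). -/
def ksum {G : Type*} [AddCommMonoid G] [DecidableEq G] : ℕ → Finset G → Finset G
  | 0, _ => {0}
  | n + 1, A => A + ksum n A

variable {G : Type*} [AddCommMonoid G] [DecidableEq G] {A : Finset G}

lemma ksum_zero : ksum 0 A = ({0} : Finset G) := rfl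
lemma ksum_succ (n : ℕ) : ksum (n+1) A = A + ksum n A := rfl

lemma ksum_add (a b : ℕ) : ksum (a + b) A = ksum a A + ksum b A := by
  induction a with
  | zero => simp [ksum_zero, Finset.singleton_add]
  | succ n ih =>
      rw [Nat.succ_add, ksum_succ, ksum_succ, ih, add_assoc]

lemma ksum_nonempty (h : A.Nonempty) (n : ℕ) : (ksum n A).Nonempty := by
  induction n with
  | zero => exact ⟨0, by simp [ksum_zero]⟩
  | succ n ih => exact Finset.Nonempty.add h ih

section Ring
variable {R : Type*} [CommRing R] [DecidableEq R] {A : Finset R}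

lemma mul_mem_ksum_left (hmul : ∀ a ∈ A, ∀ b ∈ A, a * b ∈ A)
    {h y : R} (hh : h ∈ A) {b : ℕ} (hy : y ∈ ksum b A) : h * y ∈ ksum b A := by
  induction b generalizing y with
  | zero => simp only [ksum_zero, Finset.mem_singleton] at hy ⊢; simp [hy]
  | succ n ih =>
      rw [ksum_succ, Finset.mem_add] at hy ⊢
      obtain ⟨u, hu, v, hv, rfl⟩ := hy
      exact ⟨h * u, hmul _ hh _ hu, h * v, ih hv, by ring⟩

lemma mul_mem_ksum (hmul : ∀ a ∈ A, ∀ b ∈ A, a * b ∈ A)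
    {x y : R} {a b : ℕ} (hx : x ∈ ksum a A) (hy : y ∈ ksum b A) :
    x * y ∈ ksum (a * b) A := by
  induction a generalizing x with
  | zero => simp only [ksum_zero, Finset.mem_singleton] at hx; simp [hx, ksum_zero]
  | succ n ih =>
      rw [ksum_succ, Finset.mem_add] at hx
      obtain ⟨u, hu, v, hv, rfl⟩ := hx
      have h1 : u * y ∈ ksum b A := mul_mem_ksum_left hmul hu hy
      have h2 : v * y ∈ ksum (n * b) A := ih hv
      have : (u + v) * y = u * y + v * y := by ring
      rw [this, Nat.succ_mul, Nat.add_comm, ksum_add, Finset.mem_add]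
      exact ⟨u * y, h1, v * y, h2, rfl⟩

end Ring

section Dfam
variable {R : Type*} [CommRing R] [DecidableEq R] (A : Finset R)

def Dk (k : ℕ) : Finset R := ksum k A - ksum k A

variable {A}

lemma mem_Dk {x : R} {k : ℕ} :
    x ∈ Dk A k ↔ ∃ s ∈ ksum k A, ∃ t ∈ ksum k A, s - t = x := by
  simp [Dk, Finset.mem_sub]

lemma zero_mem_Dk (h : A.Nonempty) (k : ℕ) : (0 : R) ∈ Dk A k := by
  obtain ⟨s, hs⟩ := ksum_nonempty h k
  exact mem_Dk.2 ⟨s, hs, s, hs, sub_self s⟩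

lemma neg_mem_Dk {x : R} {k : ℕ} (hx : x ∈ Dk A k) : -x ∈ Dk A k := by
  obtain ⟨s, hs, t, ht, rfl⟩ := mem_Dk.1 hx
  exact mem_Dk.2 ⟨t, ht, s, hs, by ring⟩

lemma add_mem_Dk {x y : R} {a b : ℕ} (hx : x ∈ Dk A a) (hy : y ∈ Dk A b) :
    x + y ∈ Dk A (a + b) := by
  obtain ⟨s, hs, t, ht, rfl⟩ := mem_Dk.1 hx
  obtain ⟨u, hu, v, hv, rfl⟩ := mem_Dk.1 hy
  refine mem_Dk.2 ⟨s + u, ?_, t + v, ?_, by ring⟩ <;>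
    · rw [ksum_add, Finset.mem_add]; exact ⟨_, by assumption, _, by assumption, rfl⟩

lemma sub_mem_Dk {x y : R} {a b : ℕ} (hx : x ∈ Dk A a) (hy : y ∈ Dk A b) :
    x - y ∈ Dk A (a + b) := by
  have := add_mem_Dk hx (neg_mem_Dk hy); rwa [← sub_eq_add_neg] at this

lemma Dk_mono (h : A.Nonempty) {k l : ℕ} (hkl : k ≤ l) : Dk A k ⊆ Dk A l := by
  intro x hx
  obtain ⟨s, hs, t, ht, rfl⟩ := mem_Dk.1 hx
  obtain ⟨u, hu⟩ := ksum_nonempty h (l - k)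
  have hl : ∀ w ∈ ksum k A, w + u ∈ ksum l A := by
    intro w hw
    have : k + (l - k) = l := by omega
    rw [← this, ksum_add, Finset.mem_add]
    exact ⟨w, hw, u, hu, rfl⟩
  exact mem_Dk.2 ⟨s + u, hl s hs, t + u, hl t ht, by ring⟩

lemma mul_mem_Dk (hmul : ∀ a ∈ A, ∀ b ∈ A, a * b ∈ A) {x y : R} {a b : ℕ}
    (hx : x ∈ Dk A a) (hy : y ∈ Dk A b) : x * y ∈ Dk A (2 * (a * b)) := by
  obtain ⟨s, hs, t, ht, rfl⟩ := mem_Dk.1 hx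
  obtain ⟨u, hu, v, hv, rfl⟩ := mem_Dk.1 hy
  have h1 : s * u + t * v ∈ ksum (2 * (a * b)) A := by
    rw [two_mul, ksum_add, Finset.mem_add]
    exact ⟨_, mul_mem_ksum hmul hs hu, _, mul_mem_ksum hmul ht hv, rfl⟩
  have h2 : s * v + t * u ∈ ksum (2 * (a * b)) A := by
    rw [two_mul, ksum_add, Finset.mem_add]
    exact ⟨_, mul_mem_ksum hmul hs hv, _, mul_mem_ksum hmul ht hu, rfl⟩
  exact mem_Dk.2 ⟨_, h1, _, h2, by ring⟩

end Dfam

section Zmodp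
variable {p : ℕ} [hp : Fact p.Prime] {A : Finset (ZMod p)}

lemma Dk_split {a b : ℕ} {x : ZMod p} (hx : x ∈ Dk A (a + b)) :
    ∃ y ∈ Dk A a, ∃ z ∈ Dk A b, y + z = x := by
  obtain ⟨s, hs, t, ht, rfl⟩ := mem_Dk.1 hx
  rw [ksum_add, Finset.mem_add] at hs ht
  obtain ⟨s1, hs1, s2, hs2, rfl⟩ := hs
  obtain ⟨t1, ht1, t2, ht2, rfl⟩ := ht
  exact ⟨s1 - t1, mem_Dk.2 ⟨s1, hs1, t1, ht1, rfl⟩,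
         s2 - t2, mem_Dk.2 ⟨s2, hs2, t2, ht2, rfl⟩, by ring⟩

lemma mem_ksum_one {x : ZMod p} (hx : x ∈ A) : x ∈ ksum 1 A := by
  rw [ksum_succ, Finset.mem_add]
  exact ⟨x, hx, 0, by simp [ksum_zero], add_zero x⟩

lemma exists_ne_zero_mem_Dk (h2 : 2 ≤ A.card) {k : ℕ} (hk : 1 ≤ k) :
    ∃ d ∈ Dk A k, d ≠ 0 := by
  obtain ⟨a, ha, b, hb, hab⟩ := Finset.one_lt_card.1 h2
  have hne : A.Nonempty := ⟨a, ha⟩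
  have : a - b ∈ Dk A 1 := mem_Dk.2 ⟨a, mem_ksum_one ha, b, mem_ksum_one hb, rfl⟩
  exact ⟨a - b, Dk_mono hne hk this, sub_ne_zero.2 hab⟩

lemma Dk_stab (hmul : ∀ a ∈ A, ∀ b ∈ A, a * b ∈ A) (h2 : 2 ≤ A.card)
    {k : ℕ} (hk : 1 ≤ k) (hsub : Dk A (k + 1) ⊆ Dk A k) :
    Dk A k = Finset.univ := by
  have hne : A.Nonempty := Finset.card_pos.1 (by omega)
  -- D (k + j) ⊆ D k for all j
  have key : ∀ j : ℕ, Dk A (k + j) ⊆ Dk A k := by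
    intro j
    induction j with
    | zero => simp
    | succ n ih =>
        intro x hx
        have : x ∈ Dk A ((k + 1) + n) := by
          have : k + (n + 1) = (k + 1) + n := by omega
          rwa [this] at hx
        obtain ⟨y, hy, z, hz, rfl⟩ := Dk_split this
        have hy' : y ∈ Dk A k := hsub hy
        obtain ⟨s, hs, t, ht, rfl⟩ := mem_Dk.1 hy'
        have : (s - t) + z ∈ Dk A (k + n) := add_mem_Dk (mem_Dk.2 ⟨s, hs, t, ht, rfl⟩) hz
        exact ih this
  have hadd : ∀ x ∈ Dk A k, ∀ y ∈ Dk A k, x + y ∈ Dk A k := by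
    intro x hx y hy
    exact key k (add_mem_Dk hx hy)
  obtain ⟨d, hd, hd0⟩ := exists_ne_zero_mem_Dk h2 hk
  have hnsmul : ∀ n : ℕ, (n : ZMod p) * d ∈ Dk A k := by
    intro n
    induction n with
    | zero => simpa using zero_mem_Dk hne k
    | succ m ih =>
        push_cast
        have := hadd _ ih _ hd
        convert this using 1
        ring
  rw [Finset.eq_univ_iff_forall]
  intro z
  have : (((z * d⁻¹).val : ℕ) : ZMod p) * d = z := by
    rw [ZMod.natCast_val, ZMod.cast_id]
    field_simp
  rw [← this]
  exact hnsmul _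

lemma Dk_univ_of_ge_p (hmul : ∀ a ∈ A, ∀ b ∈ A, a * b ∈ A) (h2 : 2 ≤ A.card)
    {k : ℕ} (hk : p ≤ k) : Dk A k = Finset.univ := by
  have hne : A.Nonempty := Finset.card_pos.1 (by omega)
  have hp2 := hp.out.two_le
  have main : ∀ j : ℕ, 1 ≤ j → Dk A j = Finset.univ ∨ j + 1 ≤ (Dk A j).card := by
    intro j hj
    induction j with
    | zero => omega
    | succ n ih =>
        rcases Nat.lt_or_ge n 1 with h1 | h1
        · -- n = 0, j = 1
          interval_cases n
          right
          obtain ⟨d, hd, hd0⟩ := exists_ne_zero_mem_Dk h2 (le_refl 1)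
          have hsub : ({0, d} : Finset (ZMod p)) ⊆ Dk A 1 := by
            intro x hx
            rcases Finset.mem_insert.1 hx with rfl | hx
            · exact zero_mem_Dk hne 1
            · rw [Finset.mem_singleton] at hx; subst hx; exact hd
          calc 1 + 1 = ({0, d} : Finset (ZMod p)).card := by
                rw [Finset.card_insert_of_notMem (by simpa using (Ne.symm hd0)),
                    Finset.card_singleton]
            _ ≤ _ := Finset.card_le_card hsub
        · rcases ih h1 with huniv | hcard
          · left
            rw [Finset.eq_univ_iff_forall]
            intro x
            exact Dk_mono hne (Nat.le_succ n) (huniv ▸ Finset.mem_univ x)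
          · by_cases hsub : Dk A (n + 1) ⊆ Dk A n
            · left
              have := Dk_stab hmul h2 h1 hsub
              rw [Finset.eq_univ_iff_forall]
              intro x
              exact Dk_mono hne (Nat.le_succ n) (this ▸ Finset.mem_univ x)
            · right
              have hss : Dk A n ⊂ Dk A (n + 1) := by
                refine ⟨Dk_mono hne (Nat.le_succ n), ?_⟩
                intro h; exact hsub h
              have := Finset.card_lt_card hss
              omega
  rcases main k (by omega) with huniv | hcard
  · exact huniv
  · exfalso
    have : (Dk A k).card ≤ Fintype.card (ZMod p) := Finset.card_le_univ _
    rw [ZMod.card] at this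
    omega

end Zmodp

section Energy
variable {p : ℕ} [hp : Fact p.Prime] (A : Finset (ZMod p)) (θ : ZMod p)

noncomputable def lc : ZMod p × ZMod p → ZMod p := fun q => q.1 + θ * q.2

noncomputable def Sθ : Finset (ZMod p) := (A ×ˢ A).image (lc θ)

noncomputable def Eθ : ℕ :=
  (((A ×ˢ A) ×ˢ (A ×ˢ A)).filter (fun q => lc θ q.1 = lc θ q.2)).card

lemma cs_bound : A.card ^ 4 ≤ (Sθ A θ).card * Eθ A θ := by
  classical
  set f := lc θ with hf
  set S := Sθ A θ with hS
  have hmap : ∀ q ∈ A ×ˢ A, f q ∈ S := fun q hq => Finset.mem_image_of_mem f hq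
  set r : ZMod p → ℕ := fun s => ((A ×ˢ A).filter (fun q => f q = s)).card with hr
  have h1 : ∑ s ∈ S, r s = A.card ^ 2 := by
    rw [← Finset.card_eq_sum_card_fiberwise hmap, Finset.card_product, sq]
  have h2 : ∑ s ∈ S, (r s) ^ 2 = Eθ A θ := by
    rw [Eθ, Finset.card_eq_sum_card_fiberwise (f := fun q => f q.1) (t := S)
      (fun q hq => by
        rw [Finset.mem_coe, Finset.mem_filter] at hq
        exact hmap q.1 (Finset.mem_product.2 ⟨(Finset.mem_product.1 (Finset.mem_product.1 hq.1).1).1,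
          (Finset.mem_product.1 (Finset.mem_product.1 hq.1).1).2⟩))]
    refine Finset.sum_congr rfl (fun s _ => ?_)
    rw [Finset.filter_filter]
    have hpred : ((A ×ˢ A) ×ˢ (A ×ˢ A)).filter (fun q => f q.1 = f q.2 ∧ f q.1 = s)
        = ((A ×ˢ A).filter (fun q => f q = s)) ×ˢ ((A ×ˢ A).filter (fun q => f q = s)) := by
      rw [← Finset.filter_product]
      apply Finset.filter_congr
      intro q _
      constructor
      · rintro ⟨h1, h2⟩; exact ⟨h2, h1 ▸ h2⟩
      · rintro ⟨h1, h2⟩; exact ⟨h1.trans h2.symm, h1⟩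
    rw [hpred, Finset.card_product, sq]
  have := sq_sum_le_card_mul_sum_sq (s := S) (f := r)
  rw [h1, h2] at this
  calc A.card ^ 4 = (A.card ^ 2) ^ 2 := by ring
    _ ≤ S.card * Eθ A θ := this

end Energy

section Energy2
variable {p : ℕ} [hp : Fact p.Prime] (A : Finset (ZMod p))

lemma sum_Eθ_le :
    ∑ θ ∈ (Finset.univ.erase (0 : ZMod p)), Eθ A θ ≤ A.card ^ 4 + (p - 1) * A.card ^ 2 := by
  classical
  set X := (A ×ˢ A) ×ˢ (A ×ˢ A) with hX
  set off : ZMod p → Finset ((ZMod p × ZMod p) × (ZMod p × ZMod p)) :=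
    fun θ => X.filter (fun q => lc θ q.1 = lc θ q.2 ∧ q.1 ≠ q.2) with hoff
  have hsplit : ∀ θ : ZMod p, Eθ A θ ≤ A.card ^ 2 + (off θ).card := by
    intro θ
    have hdec := Finset.card_filter_add_card_filter_not
      (s := X.filter (fun q => lc θ q.1 = lc θ q.2)) (p := fun q => q.1 = q.2)
    have hdiag : ((X.filter (fun q => lc θ q.1 = lc θ q.2)).filter (fun q => q.1 = q.2)).card
        ≤ A.card ^ 2 := by
      have hsub : (X.filter (fun q => lc θ q.1 = lc θ q.2)).filter (fun q => q.1 = q.2)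
          ⊆ X.filter (fun q => q.1 = q.2) := by
        intro q hq
        simp only [Finset.mem_filter] at hq ⊢
        exact ⟨hq.1.1, hq.2⟩
      refine le_trans (Finset.card_le_card hsub) ?_
      have : (X.filter (fun q => q.1 = q.2)).card ≤ (A ×ˢ A).card :=
        Finset.card_le_card_of_injOn (fun q => q.1)
          (fun q hq => by
            simp only [hX, Finset.mem_coe, Finset.mem_filter, Finset.mem_product] at hq
            exact Finset.mem_product.2 hq.1.1)
          (fun q hq q' hq' h => by
            simp only [Finset.mem_coe, Finset.mem_filter] at hq hq'
            have h' : q.1 = q'.1 := h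
            exact Prod.ext h' (by rw [← hq.2, ← hq'.2, h']))
      rwa [Finset.card_product, ← sq] at this
    have hne : ((X.filter (fun q => lc θ q.1 = lc θ q.2)).filter (fun q => ¬ q.1 = q.2))
        = off θ := by
      rw [hoff, Finset.filter_filter]
    rw [hne] at hdec
    rw [Eθ, ← hdec]
    omega
  have hdisj : ∀ θ1 ∈ Finset.univ.erase (0 : ZMod p), ∀ θ2 ∈ Finset.univ.erase (0 : ZMod p),
      θ1 ≠ θ2 → Disjoint (off θ1) (off θ2) := by
    intro θ1 _ θ2 _ hne12
    rw [Finset.disjoint_left]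
    intro q hq1 hq2
    simp only [hoff, Finset.mem_filter, lc] at hq1 hq2
    obtain ⟨-, e1, hne⟩ : q ∈ X ∧ (q.1.1 + θ1 * q.1.2 = q.2.1 + θ1 * q.2.2 ∧ q.1 ≠ q.2) :=
      Finset.mem_filter.1 hq1
    obtain ⟨-, e2, -⟩ : q ∈ X ∧ (q.1.1 + θ2 * q.1.2 = q.2.1 + θ2 * q.2.2 ∧ q.1 ≠ q.2) :=
      Finset.mem_filter.1 hq2
    have hb : q.1.2 ≠ q.2.2 := by
      intro hb
      rw [hb] at e1
      have : q.1.1 = q.2.1 := by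
        have := add_right_cancel e1
        exact this
      exact hne (Prod.ext this hb)
    have h1 : θ1 * (q.1.2 - q.2.2) = q.2.1 - q.1.1 := by linear_combination e1
    have h2 : θ2 * (q.1.2 - q.2.2) = q.2.1 - q.1.1 := by linear_combination e2
    have : (θ1 - θ2) * (q.1.2 - q.2.2) = 0 := by linear_combination h1 - h2
    rcases mul_eq_zero.1 this with h | h
    · exact hne12 (sub_eq_zero.1 h)
    · exact hb (sub_eq_zero.1 h)
  have hbiu : ∑ θ ∈ Finset.univ.erase (0 : ZMod p), (off θ).card ≤ A.card ^ 4 := by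
    rw [← Finset.card_biUnion hdisj]
    calc ((Finset.univ.erase (0 : ZMod p)).biUnion off).card ≤ X.card := by
          apply Finset.card_le_card
          intro q hq
          rw [Finset.mem_biUnion] at hq
          obtain ⟨θ, -, hθ⟩ := hq
          exact (Finset.mem_filter.1 hθ).1
      _ = A.card ^ 4 := by
          rw [hX, Finset.card_product, Finset.card_product]; ring
  calc ∑ θ ∈ Finset.univ.erase (0 : ZMod p), Eθ A θ
      ≤ ∑ θ ∈ Finset.univ.erase (0 : ZMod p), (A.card ^ 2 + (off θ).card) :=
        Finset.sum_le_sum (fun θ _ => hsplit θ)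
    _ = (p - 1) * A.card ^ 2 + ∑ θ ∈ Finset.univ.erase (0 : ZMod p), (off θ).card := by
        rw [Finset.sum_add_distrib, Finset.sum_const, smul_eq_mul,
          Finset.card_erase_of_mem (Finset.mem_univ _), Finset.card_univ, ZMod.card]
    _ ≤ A.card ^ 4 + (p - 1) * A.card ^ 2 := by omega

lemma exists_good_theta :
    ∃ θ : ZMod p, θ ≠ 0 ∧ (p - 1) * Eθ A θ ≤ A.card ^ 4 + (p - 1) * A.card ^ 2 := by
  classical
  have h2 : 2 ≤ p := hp.out.two_le
  have hne : (Finset.univ.erase (0 : ZMod p)).Nonempty := by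
    refine ⟨1, Finset.mem_erase.2 ⟨?_, Finset.mem_univ _⟩⟩
    exact one_ne_zero
  obtain ⟨θ, hθmem, hθmin⟩ := Finset.exists_min_image _ (fun θ => Eθ A θ) hne
  refine ⟨θ, (Finset.mem_erase.1 hθmem).1, ?_⟩
  have hcard : (Finset.univ.erase (0 : ZMod p)).card = p - 1 := by
    rw [Finset.card_erase_of_mem (Finset.mem_univ _), Finset.card_univ, ZMod.card]
  calc (p - 1) * Eθ A θ = (Finset.univ.erase (0 : ZMod p)).card • Eθ A θ := by
        rw [hcard, smul_eq_mul]
    _ ≤ ∑ θ' ∈ Finset.univ.erase (0 : ZMod p), Eθ A θ' :=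
        Finset.card_nsmul_le_sum _ _ _ (fun i hi => hθmin i hi)
    _ ≤ A.card ^ 4 + (p - 1) * A.card ^ 2 := sum_Eθ_le A

end Energy2

lemma natarith1 {a s e P : ℕ} (ha : 1 ≤ a) (hP : 1 ≤ P)
    (hCS : a ^ 4 ≤ s * e) (hE : P * e ≤ a ^ 4 + P * a ^ 2) :
    min P (a ^ 2) ≤ 2 * s := by
  by_contra hcon
  push_neg at hcon
  have h1 : 2 * s < P := lt_of_lt_of_le hcon (min_le_left _ _)
  have h2 : 2 * s < a ^ 2 := lt_of_lt_of_le hcon (min_le_right _ _)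
  have key : 2 * P * a ^ 4 ≤ 2 * s * (a ^ 4 + P * a ^ 2) := by
    calc 2 * P * a ^ 4 ≤ 2 * P * (s * e) := by
          apply Nat.mul_le_mul_left _ hCS
      _ = 2 * s * (P * e) := by ring
      _ ≤ 2 * s * (a ^ 4 + P * a ^ 2) := Nat.mul_le_mul_left _ hE
  have hlt : 2 * s * (a ^ 4 + P * a ^ 2) < 2 * P * a ^ 4 := by
    have e1 : 2 * s * a ^ 4 < P * a ^ 4 :=
      Nat.mul_lt_mul_of_lt_of_le h1 (le_refl _) (by positivity)
    have e2 : 2 * s * (P * a ^ 2) < a ^ 2 * (P * a ^ 2) :=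
      Nat.mul_lt_mul_of_lt_of_le h2 (le_refl _) (by positivity)
    have e3 : a ^ 2 * (P * a ^ 2) = P * a ^ 4 := by ring
    calc 2 * s * (a ^ 4 + P * a ^ 2) = 2 * s * a ^ 4 + 2 * s * (P * a ^ 2) := by ring
      _ < P * a ^ 4 + a ^ 2 * (P * a ^ 2) := by omega
      _ = 2 * P * a ^ 4 := by rw [e3]; ring
  omega

lemma natarith2 {a s e P : ℕ} (ha : 1 ≤ a) (hP : 4 ≤ P)
    (hCS : a ^ 4 ≤ s * e) (hE : P * e ≤ a ^ 4 + P * a ^ 2)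
    (h3 : 3 * (P + 1) ≤ a ^ 2) : P + 1 < 2 * s := by
  by_contra hcon
  push_neg at hcon
  -- 2*s ≤ P + 1
  have key : 2 * P * a ^ 4 ≤ (P + 1) * (a ^ 4 + P * a ^ 2) := by
    calc 2 * P * a ^ 4 ≤ 2 * P * (s * e) := Nat.mul_le_mul_left _ hCS
      _ = 2 * s * (P * e) := by ring
      _ ≤ 2 * s * (a ^ 4 + P * a ^ 2) := Nat.mul_le_mul_left _ hE
      _ ≤ (P + 1) * (a ^ 4 + P * a ^ 2) := Nat.mul_le_mul_right _ hcon
  -- (P - 1) * a^4 ≤ P*(P+1)*a^2  i.e. proceed via nlinarith on casts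
  have ha2 : 3 * (P + 1) * a ^ 2 ≤ a ^ 4 := by
    calc 3 * (P + 1) * a ^ 2 ≤ a ^ 2 * a ^ 2 := Nat.mul_le_mul_right _ h3
      _ = a ^ 4 := by ring
  nlinarith [key, ha2, sq_nonneg a, hP]

section Main
variable {p : ℕ} [hp : Fact p.Prime] {A : Finset (ZMod p)}

/-- The ratio condition: `x` is a ratio of differences of elements of `B`. -/
def Rcond (B : Finset (ZMod p)) (x : ZMod p) : Prop :=
  ∃ a ∈ B, ∃ b ∈ B, ∃ c ∈ B, ∃ d ∈ B, c ≠ d ∧ x * (c - d) = a - b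

lemma two_le_card_Dk (h2 : 2 ≤ A.card) {k : ℕ} (hk : 1 ≤ k) :
    2 ≤ (Dk A k).card := by
  have hne : A.Nonempty := Finset.card_pos.1 (by omega)
  obtain ⟨e, he, he0⟩ := exists_ne_zero_mem_Dk h2 hk
  have h0 : (0 : ZMod p) ∈ Dk A k := zero_mem_Dk hne k
  have hsub : ({0, e} : Finset (ZMod p)) ⊆ Dk A k := by
    intro z hz
    rcases Finset.mem_insert.1 hz with rfl | hz
    · exact h0
    · rw [Finset.mem_singleton] at hz; subst hz; exact he
  calc 2 = ({0, e} : Finset (ZMod p)).card := by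
        rw [Finset.card_insert_of_notMem (by simpa using Ne.symm he0),
          Finset.card_singleton]
    _ ≤ _ := Finset.card_le_card hsub

lemma step_lemma (hmul : ∀ a ∈ A, ∀ b ∈ A, a * b ∈ A) (h2 : 2 ≤ A.card)
    {k : ℕ} (hk : 1 ≤ k) :
    min (p - 1) ((Dk A k).card ^ 2) ≤ 2 * (Dk A (12 * k ^ 2)).card := by
  classical
  have hne : A.Nonempty := Finset.card_pos.1 (by omega)
  have hp2 : 2 ≤ p := hp.out.two_le
  set B := Dk A k with hB
  have hBcard : 1 ≤ B.card := by
    have := zero_mem_Dk hne (A := A) k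
    exact Finset.card_pos.2 ⟨0, this⟩
  -- membership in Dk A (4k²) of (u - v) * w for u,v,w ∈ B
  have hmem4 : ∀ u ∈ B, ∀ v ∈ B, ∀ w ∈ B, (u - v) * w ∈ Dk A (4 * k ^ 2) := by
    intro u hu v hv w hw
    have h1 : u * w ∈ Dk A (2 * (k * k)) := mul_mem_Dk hmul hu hw
    have h2 : v * w ∈ Dk A (2 * (k * k)) := mul_mem_Dk hmul hv hw
    have h3 := sub_mem_Dk h1 h2
    have : (2 * (k * k) + 2 * (k * k)) = 4 * k ^ 2 := by ring
    rw [this] at h3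
    rwa [← sub_mul] at h3
  by_cases hR : ∀ x : ZMod p, Rcond B x
  -- Case 1: all ratios realized; use energy averaging
  · obtain ⟨θ, hθ0, hθE⟩ := exists_good_theta B
    have hCS := cs_bound B θ
    have hmin : min (p - 1) (B.card ^ 2) ≤ 2 * (Sθ B θ).card := by
      exact natarith1 hBcard (by omega) hCS hθE
    -- clear denominators: (c₀ - d₀) • (Sθ B θ) ⊆ Dk A (8k²)
    obtain ⟨a₀, ha₀, b₀, hb₀, c₀, hc₀, d₀, hd₀, hcd, hx⟩ := hR θ
    have hlam : c₀ - d₀ ≠ 0 := sub_ne_zero.2 hcd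
    have himg : (Sθ B θ).image (fun z => (c₀ - d₀) * z) ⊆ Dk A (12 * k ^ 2) := by
      intro w hw
      rw [Finset.mem_image] at hw
      obtain ⟨z, hz, rfl⟩ := hw
      rw [Sθ, Finset.mem_image] at hz
      obtain ⟨q, hq, rfl⟩ := hz
      rw [Finset.mem_product] at hq
      have e1 : (c₀ - d₀) * lc θ q = (c₀ - d₀) * q.1 + (a₀ - b₀) * q.2 := by
        rw [lc]; linear_combination q.2 * hx
      rw [e1]
      have m1 : (c₀ - d₀) * q.1 ∈ Dk A (4 * k ^ 2) := hmem4 _ hc₀ _ hd₀ _ hq.1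
      have m2 : (a₀ - b₀) * q.2 ∈ Dk A (4 * k ^ 2) := hmem4 _ ha₀ _ hb₀ _ hq.2
      have := add_mem_Dk m1 m2
      exact Dk_mono hne (by nlinarith : 4 * k ^ 2 + 4 * k ^ 2 ≤ 12 * k ^ 2) this
    have hcard : (Sθ B θ).card ≤ (Dk A (12 * k ^ 2)).card := by
      calc (Sθ B θ).card = ((Sθ B θ).image (fun z => (c₀ - d₀) * z)).card :=
            (Finset.card_image_of_injective _ (mul_right_injective₀ hlam)).symm
        _ ≤ _ := Finset.card_le_card himg
    omega
  -- Case 2: some ratio missed; get full squaring via an injective map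
  · push_neg at hR
    obtain ⟨ξ₀, hξ₀⟩ := hR
    have hfound : ∃ n : ℕ, ¬ Rcond B ((n : ZMod p)) := by
      refine ⟨ξ₀.val, ?_⟩
      rwa [ZMod.natCast_val, ZMod.cast_id]
    set n₀ := Nat.find hfound with hn₀
    have hspec : ¬ Rcond B ((n₀ : ZMod p)) := Nat.find_spec hfound
    have hR0 : Rcond B 0 := by
      obtain ⟨c, hc, d, hd, hcd⟩ := Finset.one_lt_card.1 (two_le_card_Dk h2 hk)
      exact ⟨c, hc, c, hc, c, hc, d, hd, hcd, by ring⟩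
    have hn₀pos : 1 ≤ n₀ := by
      rcases Nat.eq_zero_or_pos n₀ with h | h
      · exfalso; apply hspec; rw [h]; push_cast; exact hR0
      · exact h
    have hxR : Rcond B (((n₀ - 1 : ℕ) : ZMod p)) := by
      by_contra hcon
      exact absurd (Nat.find_min' hfound hcon) (by omega)
    set x := ((n₀ - 1 : ℕ) : ZMod p) with hxdef
    have hξeq : ((n₀ : ℕ) : ZMod p) = x + 1 := by
      rw [hxdef]
      have : n₀ = (n₀ - 1) + 1 := by omega
      rw [this]
      push_cast
      ring
    set ξ := ((n₀ : ℕ) : ZMod p) with hξdef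
    -- injectivity of q ↦ q.1 + ξ q.2 on B × B
    have hinj : Set.InjOn (lc ξ) ↑(B ×ˢ B) := by
      intro q hq q' hq' heq
      simp only [Finset.coe_product, Set.mem_prod, Finset.mem_coe] at hq hq'
      rw [lc, lc] at heq
      by_cases hbb : q.2 = q'.2
      · refine Prod.ext ?_ hbb
        rw [hbb] at heq
        exact add_right_cancel heq
      · exfalso
        apply hspec
        refine ⟨q'.1, hq'.1, q.1, hq.1, q.2, hq.2, q'.2, hq'.2, hbb, ?_⟩
        linear_combination heq
    have hcardS : (Sθ B ξ).card = B.card ^ 2 := by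
      rw [Sθ, Finset.card_image_of_injOn hinj, Finset.card_product, sq]
    -- clear denominators
    obtain ⟨a₀, ha₀, b₀, hb₀, c₀, hc₀, d₀, hd₀, hcd, hx⟩ := hxR
    have hlam : c₀ - d₀ ≠ 0 := sub_ne_zero.2 hcd
    have himg : (Sθ B ξ).image (fun z => (c₀ - d₀) * z) ⊆ Dk A (12 * k ^ 2) := by
      intro w hw
      rw [Finset.mem_image] at hw
      obtain ⟨z, hz, rfl⟩ := hw
      rw [Sθ, Finset.mem_image] at hz
      obtain ⟨q, hq, rfl⟩ := hz
      rw [Finset.mem_product] at hq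
      have e1 : (c₀ - d₀) * lc ξ q
          = (c₀ - d₀) * q.1 + (c₀ - d₀) * q.2 + (a₀ - b₀) * q.2 := by
        rw [lc, hξeq]
        linear_combination q.2 * hx
      rw [e1]
      have m1 : (c₀ - d₀) * q.1 ∈ Dk A (4 * k ^ 2) := hmem4 _ hc₀ _ hd₀ _ hq.1
      have m2 : (c₀ - d₀) * q.2 ∈ Dk A (4 * k ^ 2) := hmem4 _ hc₀ _ hd₀ _ hq.2
      have m3 : (a₀ - b₀) * q.2 ∈ Dk A (4 * k ^ 2) := hmem4 _ ha₀ _ hb₀ _ hq.2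
      have := add_mem_Dk (add_mem_Dk m1 m2) m3
      have heq : 4 * k ^ 2 + 4 * k ^ 2 + 4 * k ^ 2 = 12 * k ^ 2 := by ring
      rwa [heq] at this
    have hcard : B.card ^ 2 ≤ (Dk A (12 * k ^ 2)).card := by
      calc B.card ^ 2 = (Sθ B ξ).card := hcardS.symm
        _ = ((Sθ B ξ).image (fun z => (c₀ - d₀) * z)).card :=
            (Finset.card_image_of_injective _ (mul_right_injective₀ hlam)).symm
        _ ≤ _ := Finset.card_le_card himg
    calc min (p - 1) (B.card ^ 2) ≤ B.card ^ 2 := min_le_right _ _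
      _ ≤ (Dk A (12 * k ^ 2)).card := hcard
      _ ≤ 2 * (Dk A (12 * k ^ 2)).card := by omega

lemma covering_lemma (h2 : 2 ≤ A.card) {k : ℕ} (hk : 1 ≤ k) (hp5 : 5 ≤ p)
    (h3 : 3 * p ≤ (Dk A k).card ^ 2) :
    ∃ θ : ZMod p, θ ≠ 0 ∧ ∀ z : ZMod p, ∃ c1 ∈ Dk A (2 * k), ∃ c2 ∈ Dk A (2 * k),
      c1 + θ * c2 = z := by
  classical
  have hne : A.Nonempty := Finset.card_pos.1 (by omega)
  set B := Dk A k with hB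
  have hBcard : 1 ≤ B.card := Finset.card_pos.2 ⟨0, zero_mem_Dk hne k⟩
  obtain ⟨θ, hθ0, hθE⟩ := exists_good_theta B
  have hCS := cs_bound B θ
  have hp1 : p - 1 + 1 = p := by omega
  have h2S : p < 2 * (Sθ B θ).card := by
    have := natarith2 (P := p - 1) hBcard (by omega) hCS hθE (by rw [hp1]; exact h3)
    omega
  refine ⟨θ, hθ0, fun z => ?_⟩
  -- pigeonhole: Sθ and z + Sθ intersect
  set S := Sθ B θ with hS
  set T := S.image (fun s => z + s) with hT
  have hTcard : T.card = S.card :=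
    Finset.card_image_of_injective _ (add_right_injective z)
  have hint : (T ∩ S).Nonempty := by
    by_contra hcon
    rw [Finset.not_nonempty_iff_eq_empty, ← Finset.disjoint_iff_inter_eq_empty] at hcon
    have := Finset.card_union_of_disjoint hcon
    have hle : (T ∪ S).card ≤ p := by
      have := Finset.card_le_univ (T ∪ S)
      rwa [ZMod.card] at this
    omega
  obtain ⟨s, hs⟩ := hint
  rw [Finset.mem_inter] at hs
  obtain ⟨hsT, hsS⟩ := hs
  rw [hT, Finset.mem_image] at hsT
  obtain ⟨s', hs', hss'⟩ := hsT
  -- s = z + s', s ∈ S, s' ∈ S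
  rw [hS, Sθ, Finset.mem_image] at hsS hs'
  obtain ⟨q1, hq1, hq1e⟩ := hsS
  obtain ⟨q2, hq2, hq2e⟩ := hs'
  rw [Finset.mem_product] at hq1 hq2
  have hm1 : q1.1 - q2.1 ∈ Dk A (2 * k) := by
    have := sub_mem_Dk hq1.1 hq2.1; rwa [← two_mul] at this
  have hm2 : q1.2 - q2.2 ∈ Dk A (2 * k) := by
    have := sub_mem_Dk hq1.2 hq2.2; rwa [← two_mul] at this
  refine ⟨q1.1 - q2.1, hm1, q1.2 - q2.2, hm2, ?_⟩
  have : lc θ q1 - lc θ q2 = z := by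
    rw [hq1e, hq2e, ← hss']; ring
  rw [lc, lc] at this
  linear_combination this

lemma endgame (hmul : ∀ a ∈ A, ∀ b ∈ A, a * b ∈ A) (h2 : 2 ≤ A.card)
    {k : ℕ} (hk : 1 ≤ k) (hp5 : 5 ≤ p)
    (h3 : 3 * p ≤ (Dk A k).card ^ 2) :
    Dk A (24 * k ^ 2 + 4 * k) = Finset.univ := by
  classical
  have hne : A.Nonempty := Finset.card_pos.1 (by omega)
  obtain ⟨θ, hθ0, hcov⟩ := covering_lemma h2 hk hp5 h3
  by_cases hsub : Dk A (2 * k + 1) ⊆ Dk A (2 * k)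
  · have huniv := Dk_stab hmul h2 (by omega : 1 ≤ 2 * k) hsub
    rw [Finset.eq_univ_iff_forall] at huniv ⊢
    intro z
    exact Dk_mono hne (by nlinarith : 2 * k ≤ 24 * k ^ 2 + 4 * k) (huniv z)
  · obtain ⟨y, hy1, hy2⟩ := Finset.not_subset.1 hsub
    obtain ⟨c, hc, c', hc', hyeq⟩ := hcov y
    have hc'0 : c' ≠ 0 := by
      intro h
      apply hy2
      rw [h, mul_zero, add_zero] at hyeq
      rwa [← hyeq]
    have he : θ * c' ∈ Dk A ((2 * k + 1) + 2 * k) := by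
      have : θ * c' = y - c := by linear_combination hyeq
      rw [this]
      exact sub_mem_Dk hy1 hc
    rw [Finset.eq_univ_iff_forall]
    intro z
    obtain ⟨c1, hc1, c2, hc2, hz⟩ := hcov (z * c'⁻¹)
    have hz' : z = c1 * c' + (θ * c') * c2 := by
      have : z * c'⁻¹ * c' = z := by field_simp
      calc z = (c1 + θ * c2) * c' := by rw [hz]; exact this.symm
        _ = c1 * c' + (θ * c') * c2 := by ring
    rw [hz']
    have m1 : c1 * c' ∈ Dk A (2 * ((2 * k) * (2 * k))) := mul_mem_Dk hmul hc1 hc'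
    have m2 : (θ * c') * c2 ∈ Dk A (2 * (((2 * k + 1) + 2 * k) * (2 * k))) :=
      mul_mem_Dk hmul he hc2
    have := add_mem_Dk m1 m2
    have heq : 2 * ((2 * k) * (2 * k)) + 2 * (((2 * k + 1) + 2 * k) * (2 * k))
        = 24 * k ^ 2 + 4 * k := by ring
    rwa [heq] at this

lemma card_le_card_Dk_one (hne : A.Nonempty) : A.card ≤ (Dk A 1).card := by
  obtain ⟨h₀, hh₀⟩ := hne
  apply Finset.card_le_card_of_injOn (fun a => a - h₀)
  · intro a ha
    exact mem_Dk.2 ⟨a, mem_ksum_one ha, h₀, mem_ksum_one hh₀, rfl⟩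
  · intro a _ b _ h
    simpa using h

lemma card_Dk_le_p (k : ℕ) : (Dk A k).card ≤ p := by
  have := Finset.card_le_univ (Dk A k)
  rwa [ZMod.card] at this

end Main

/-- The sequence of sumset levels. -/
def kseq : ℕ → ℕ
  | 0 => 1
  | j + 1 => 12 * (kseq j) ^ 2

lemma kseq_pos (j : ℕ) : 1 ≤ kseq j := by
  induction j with
  | zero => simp [kseq]
  | succ n ih => simp only [kseq]; nlinarith

section Chain
variable {p : ℕ} [hp : Fact p.Prime] {A : Finset (ZMod p)}

lemma chain_lemma (hmul : ∀ a ∈ A, ∀ b ∈ A, a * b ∈ A) (h2 : 2 ≤ A.card)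
    {δ : ℝ} (hδ₀ : 0 < δ) (hp17 : 17 ≤ p) (h4 : (4 : ℝ) ≤ (p : ℝ) ^ δ)
    (hA : (p : ℝ) ^ δ ≤ (A.card : ℝ)) (J : ℕ) (hJ : 2 ≤ δ * 2 ^ J) :
    p - 1 ≤ 2 * (Dk A (kseq J)).card := by
  classical
  have hne : A.Nonempty := Finset.card_pos.1 (by omega)
  have hp0 : (0 : ℝ) < (p : ℝ) := by positivity
  have hppos : (1 : ℝ) ≤ (p : ℝ) := by exact_mod_cast Nat.one_le_iff_ne_zero.2 (by omega)
  -- the invariant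
  have main : ∀ j : ℕ, p - 1 ≤ 2 * (Dk A (kseq j)).card ∨
      2 * (p : ℝ) ^ (δ * 2 ^ j / 2) ≤ ((Dk A (kseq j)).card : ℝ) := by
    intro j
    induction j with
    | zero =>
        right
        have hhalf : (p : ℝ) ^ (δ / 2) * (p : ℝ) ^ (δ / 2) = (p : ℝ) ^ δ := by
          rw [← Real.rpow_add hp0]; ring_nf
        have hge2 : (2 : ℝ) ≤ (p : ℝ) ^ (δ / 2) := by
          nlinarith [Real.rpow_nonneg (le_of_lt hp0) (δ / 2), hhalf]
        have hbase : 2 * (p : ℝ) ^ (δ / 2) ≤ (p : ℝ) ^ δ := by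
          nlinarith
        have hcard1 : ((Dk A (kseq 0)).card : ℝ) ≥ (A.card : ℝ) := by
          have := card_le_card_Dk_one (A := A) hne
          simp only [kseq]
          exact_mod_cast this
        have hexp : δ * 2 ^ (0 : ℕ) / 2 = δ / 2 := by norm_num
        rw [hexp]
        linarith
    | succ n ih =>
        have hstep := step_lemma hmul h2 (kseq_pos n)
        have hkseq : kseq (n + 1) = 12 * (kseq n) ^ 2 := rfl
        rw [← hkseq] at hstep
        set M := (Dk A (kseq n)).card with hM
        set M' := (Dk A (kseq (n + 1))).card with hM'
        rcases ih with hleft | hright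
        · -- p - 1 ≤ 2 M ⇒ p - 1 ≤ M² (as p ≥ 17) ⇒ left
          left
          have hM8 : 8 ≤ M := by omega
          have hsq : p - 1 ≤ M ^ 2 := by
            calc p - 1 ≤ 2 * M := hleft
              _ ≤ M ^ 2 := by nlinarith
          have := min_eq_left hsq
          omega
        · by_cases hcase : p - 1 ≤ M ^ 2
          · left
            have := min_eq_left hcase
            omega
          · right
            push_neg at hcase
            have hminr : min (p - 1) (M ^ 2) = M ^ 2 := min_eq_right (le_of_lt hcase)
            rw [hminr] at hstep
            -- (M':ℝ) ≥ M²/2 ≥ (2 p^{q})²/2 = 2 p^{2q}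
            have hstepR : (M ^ 2 : ℝ) ≤ 2 * (M' : ℝ) := by exact_mod_cast hstep
            have hq : (p : ℝ) ^ (δ * 2 ^ n / 2) * (p : ℝ) ^ (δ * 2 ^ n / 2)
                = (p : ℝ) ^ (δ * 2 ^ (n + 1) / 2) := by
              rw [← Real.rpow_add hp0]
              congr 1
              ring
            have hMR : (2 : ℝ) * (p : ℝ) ^ (δ * 2 ^ n / 2) ≤ (M : ℝ) := hright
            have hsq' : (4 : ℝ) * (p : ℝ) ^ (δ * 2 ^ (n + 1) / 2) ≤ (M : ℝ) ^ 2 := by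
              rw [← hq]
              nlinarith [Real.rpow_nonneg (le_of_lt hp0) (δ * 2 ^ n / 2)]
            have : (M : ℝ) ^ 2 ≤ 2 * (M' : ℝ) := by exact_mod_cast hstepR
            linarith
  rcases main J with hleft | hright
  · exact hleft
  · exfalso
    have h1 : (1 : ℝ) ≤ δ * 2 ^ J / 2 := by linarith
    have hpow : (p : ℝ) ≤ (p : ℝ) ^ (δ * 2 ^ J / 2) := by
      calc (p : ℝ) = (p : ℝ) ^ (1 : ℝ) := (Real.rpow_one _).symm
        _ ≤ _ := Real.rpow_le_rpow_of_exponent_le hppos h1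
    have hcardle : ((Dk A (kseq J)).card : ℝ) ≤ (p : ℝ) := by
      exact_mod_cast card_Dk_le_p (A := A) (kseq J)
    linarith

theorem BGK (hmul : ∀ a ∈ A, ∀ b ∈ A, a * b ∈ A) (h2 : 2 ≤ A.card)
    {δ : ℝ} (hδ₀ : 0 < δ) (hA : (p : ℝ) ^ δ ≤ (A.card : ℝ)) (J : ℕ)
    (hJ : 2 ≤ δ * 2 ^ J)
    {k : ℕ} (hk1 : 24 * (kseq J) ^ 2 + 4 * (kseq J) ≤ k)
    (hk2 : (Nat.ceil ((4 : ℝ) ^ (1 / δ)) + 17 : ℕ) ≤ k) :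
    Dk A k = Finset.univ := by
  classical
  have hne : A.Nonempty := Finset.card_pos.1 (by omega)
  have hp2 : 2 ≤ p := hp.out.two_le
  by_cases hbig : 17 ≤ p ∧ (4 : ℝ) ≤ (p : ℝ) ^ δ
  · obtain ⟨hp17, h4⟩ := hbig
    have hchain := chain_lemma hmul h2 hδ₀ hp17 h4 hA J hJ
    have h3p : 3 * p ≤ (Dk A (kseq J)).card ^ 2 := by
      set M := (Dk A (kseq J)).card with hMdef
      have hM8 : 8 ≤ M := by omega
      have hpM : p ≤ 2 * M + 1 := by omega
      nlinarith
    have hend := endgame hmul h2 (kseq_pos J) (by omega) h3p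
    rw [Finset.eq_univ_iff_forall] at hend ⊢
    intro z
    exact Dk_mono hne hk1 (hend z)
  · -- small p: p ≤ k
    have hpk : p ≤ k := by
      rw [not_and_or] at hbig
      rcases hbig with hsmall | hsmall
      · omega
      · push_neg at hsmall
        have hplt : (p : ℝ) < (4 : ℝ) ^ (1 / δ) := by
          have hp0 : (0 : ℝ) < (p : ℝ) := by positivity
          have hlt := Real.rpow_lt_rpow (Real.rpow_nonneg (le_of_lt hp0) δ) hsmall
            (by positivity : (0 : ℝ) < 1 / δ)
          have hid : ((p : ℝ) ^ δ) ^ (1 / δ) = (p : ℝ) := by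
            rw [← Real.rpow_mul (le_of_lt hp0), mul_one_div,
              div_self (ne_of_gt hδ₀), Real.rpow_one]
          rwa [hid] at hlt
        have : p ≤ Nat.ceil ((4 : ℝ) ^ (1 / δ)) := by
          have := le_of_lt (lt_of_lt_of_le hplt (Nat.le_ceil _))
          exact_mod_cast this
        omega
    exact Dk_univ_of_ge_p hmul h2 hpk

end Chain

theorem stmt_3 (δ : ℝ) (hδ₀ : 0 < δ) (hδ₁ : δ < 1) :
    ∃ k : ℕ, 0 < k ∧ ∀ p : ℕ, ∀ _ : Fact p.Prime, ∀ H : Subgroup (ZMod p)ˣ,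
      ∀ Hs : Finset (ZMod p),
      (∀ x : ZMod p, x ∈ Hs ↔ ∃ u : (ZMod p)ˣ, u ∈ H ∧ (u : ZMod p) = x) →
      (p : ℝ) ^ δ ≤ (Hs.card : ℝ) →
      ∀ x : ZMod p, x ∈ ksum k Hs - ksum k Hs := by
  classical
  set J : ℕ := Nat.ceil (2 / δ) with hJdef
  have hJ : 2 ≤ δ * 2 ^ J := by
    have h1 : (2 / δ : ℝ) ≤ (J : ℝ) := Nat.le_ceil _
    have h2 : (J : ℝ) ≤ (2 : ℝ) ^ J := by
      have := Nat.lt_two_pow_self (n := J)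
      have : (J : ℝ) < ((2 ^ J : ℕ) : ℝ) := by exact_mod_cast this
      push_cast at this
      linarith
    have h3 : (2 / δ : ℝ) ≤ (2 : ℝ) ^ J := le_trans h1 h2
    calc (2 : ℝ) = δ * (2 / δ) := by field_simp
      _ ≤ δ * 2 ^ J := by
        apply mul_le_mul_of_nonneg_left h3 (le_of_lt hδ₀)
  set k : ℕ := max (24 * (kseq J) ^ 2 + 4 * (kseq J)) (Nat.ceil ((4 : ℝ) ^ (1 / δ)) + 17)
    with hkdef
  refine ⟨k, by positivity, ?_⟩
  intro p hp H Hs hchar hcard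
  have hp2 : 2 ≤ p := hp.out.two_le
  -- Hs is closed under multiplication and contains 1
  have hmul : ∀ a ∈ Hs, ∀ b ∈ Hs, a * b ∈ Hs := by
    intro a ha b hb
    obtain ⟨u, hu, hua⟩ := (hchar a).1 ha
    obtain ⟨v, hv, hvb⟩ := (hchar b).1 hb
    exact (hchar (a * b)).2 ⟨u * v, mul_mem hu hv, by rw [Units.val_mul, hua, hvb]⟩
  have hone : (1 : ZMod p) ∈ Hs := (hchar 1).2 ⟨1, one_mem H, Units.val_one⟩
  have h2 : 2 ≤ Hs.card := by
    have hp0 : (0 : ℝ) < (p : ℝ) := by positivity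
    have h1p : (1 : ℝ) < (p : ℝ) := by exact_mod_cast (by omega : 1 < p)
    have : (1 : ℝ) < (p : ℝ) ^ δ := Real.one_lt_rpow_iff_of_pos hp0 |>.2 (Or.inl ⟨h1p, hδ₀⟩)
    have : (1 : ℝ) < (Hs.card : ℝ) := lt_of_lt_of_le this hcard
    exact_mod_cast this
  have huniv : Dk Hs k = Finset.univ :=
    BGK hmul h2 hδ₀ hcard J hJ (le_max_left _ _) (le_max_right _ _)
  intro x
  have := (Finset.eq_univ_iff_forall.1 huniv) x
  simpa [Dk] using this
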